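/- Take α = 1 (so the X_i are i.i.d. exponential of rate 1). Then for every integer m with 2 ≤ m ≤ n, γ_{m−1} = Σ_{k=0}^∞ (−Δ)^k γ_m, where (−Δ)^k γ_m = Σ_{i=0}^{k} (−1)^i binom(k,i) γ_{m+i}; equivalently, for every integer m with 1 ≤ m ≤ n−1, γ_m = γ_n + Σ_{k=1}^∞ p_{1,n,k} · (n−m)_k / (n)_k. -/

import Mathlib

open MeasureTheory ProbabilityTheory Real

/-- The Pochhammer symbol `(c)_k = c (c+1) ⋯ (c+k−1)` for a real `c`. -/
noncomputable def poch (c : ℝ) (k : ℕ) : ℝ := ∏ i ∈ Finset.range k, (c + i)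

lemma poch_succ (c : ℝ) (k : ℕ) : poch c (k + 1) = poch c k * (c + k) :=
  Finset.prod_range_succ _ _

lemma poch_shift (c : ℝ) (k : ℕ) : poch c (k + 1) = c * poch (c + 1) k := by
  rw [poch, Finset.prod_range_succ']
  rw [mul_comm, poch]
  congr 1
  · simp
  · refine Finset.prod_congr rfl fun i _ => ?_
    push_cast
    ring

lemma poch_pos {c : ℝ} (hc : 0 < c) (k : ℕ) : 0 < poch c k :=
  Finset.prod_pos fun i _ => by positivity

lemma poch_nonneg {c : ℝ} (hc : 0 ≤ c) (k : ℕ) : 0 ≤ poch c k :=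
  Finset.prod_nonneg fun i _ => by positivity

lemma sum_poch (a : ℝ) (N : ℕ) :
    ∑ k ∈ Finset.range (N + 1), poch a k / k.factorial = poch (a + 1) N / N.factorial := by
  induction N with
  | zero => simp [poch]
  | succ N ih =>
    rw [Finset.sum_range_succ, ih, poch_succ (a + 1) N, poch_shift a N, Nat.factorial_succ]
    have hN : (N.factorial : ℝ) ≠ 0 := Nat.cast_ne_zero.mpr N.factorial_ne_zero
    have hN1 : ((N : ℝ) + 1) ≠ 0 := by positivity
    push_cast
    field_simp
    ring

lemma hasSum_poch_geom (a : ℕ) {x : ℝ} (h0 : 0 ≤ x) (h1 : x < 1) :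
    HasSum (fun k => poch (a : ℝ) k / k.factorial * x ^ k) ((1 - x)⁻¹ ^ a) := by
  induction a with
  | zero =>
    have he : (fun k => poch ((0 : ℕ) : ℝ) k / k.factorial * x ^ k)
        = fun k => if k = 0 then (1 : ℝ) else 0 := by
      funext k
      cases k with
      | zero => simp [poch]
      | succ k =>
        have hz : poch ((0 : ℕ) : ℝ) (k + 1) = 0 := by
          apply Finset.prod_eq_zero (Finset.mem_range.mpr (Nat.succ_pos k))
          simp
        rw [hz]
        simp
    rw [he]
    simpa using hasSum_ite_eq 0 (1 : ℝ)
  | succ a ih =>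
    have hg : HasSum (fun k => x ^ k) (1 - x)⁻¹ := hasSum_geometric_of_lt_one h0 h1
    have hfn : Summable (fun k => ‖poch (a : ℝ) k / k.factorial * x ^ k‖) := by
      have he : (fun k => ‖poch (a : ℝ) k / k.factorial * x ^ k‖)
          = fun k => poch (a : ℝ) k / k.factorial * x ^ k := by
        funext k
        refine norm_of_nonneg ?_
        have := poch_nonneg (show (0 : ℝ) ≤ (a : ℝ) by positivity) k
        positivity
      rw [he]
      exact ih.summable
    have hgn : Summable (fun k => ‖x ^ k‖) := by
      have he : (fun k => ‖x ^ k‖) = fun k => x ^ k :=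
        funext fun k => norm_of_nonneg (pow_nonneg h0 k)
      rw [he]
      exact hg.summable
    have hmul := hasSum_sum_range_mul_of_summable_norm hfn hgn
    rw [ih.tsum_eq, hg.tsum_eq] at hmul
    have hcong : (fun N => ∑ k ∈ Finset.range (N + 1),
          (poch (a : ℝ) k / k.factorial * x ^ k) * x ^ (N - k))
        = fun N => poch ((a : ℝ) + 1) N / N.factorial * x ^ N := by
      funext N
      rw [← sum_poch, Finset.sum_mul]
      refine Finset.sum_congr rfl fun k hk => ?_
      have hk' : k ≤ N := Nat.lt_succ_iff.mp (Finset.mem_range.mp hk)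
      rw [mul_assoc, pow_mul_pow_sub x hk']
    rw [hcong] at hmul
    have h2 : ((a + 1 : ℕ) : ℝ) = (a : ℝ) + 1 := by push_cast; ring
    rw [h2, pow_succ]
    exact hmul

lemma pt_one {c : ℝ} (hc0 : 0 < c) (hc1 : c ≤ 1) (r : ℝ) :
    HasSum (fun k => (1 - c) ^ k * c ^ r) (c ^ (r - 1)) := by
  have hg : HasSum (fun k : ℕ => (1 - c) ^ k) c⁻¹ := by
    have := hasSum_geometric_of_lt_one (show (0 : ℝ) ≤ 1 - c by linarith)
      (show 1 - c < 1 by linarith)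
    simpa using this
  have h := hg.mul_right (c ^ r)
  have hv : c⁻¹ * c ^ r = c ^ (r - 1) := by
    rw [Real.rpow_sub hc0, Real.rpow_one, div_eq_mul_inv, mul_comm]
  rwa [hv] at h

lemma pt_expand {c : ℝ} (hc0 : 0 < c) (k : ℕ) (r : ℝ) :
    (1 - c) ^ k * c ^ r
      = ∑ i ∈ Finset.range (k + 1), (-1 : ℝ) ^ i * (k.choose i) * c ^ (r + i) := by
  have hb : (1 - c) ^ k = ∑ i ∈ Finset.range (k + 1), (-c) ^ i * 1 ^ (k - i) * (k.choose i) := by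
    rw [← add_pow]
    ring_nf
  rw [hb, Finset.sum_mul]
  refine Finset.sum_congr rfl fun i _ => ?_
  rw [Real.rpow_add hc0, Real.rpow_natCast, neg_pow, one_pow]
  ring

lemma pt_two {c : ℝ} (hc0 : 0 < c) (hc1 : c ≤ 1) (a M N : ℕ) (hmn : M + a = N) :
    HasSum (fun k => poch (a : ℝ) k / k.factorial * (1 - c) ^ k * c ^ (N : ℝ))
      (c ^ (M : ℝ)) := by
  have h := (hasSum_poch_geom a (show (0 : ℝ) ≤ 1 - c by linarith)
    (show 1 - c < 1 by linarith)).mul_right (c ^ (N : ℝ))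
  have hv : (1 - (1 - c))⁻¹ ^ a * c ^ (N : ℝ) = c ^ (M : ℝ) := by
    rw [sub_sub_cancel, Real.rpow_natCast, Real.rpow_natCast, ← hmn, pow_add, inv_pow,
      mul_comm (c ^ M) (c ^ a), ← mul_assoc, inv_mul_cancel₀ (pow_ne_zero _ hc0.ne'), one_mul]
  rwa [hv] at h

lemma my_integral_tsum {Ω : Type*} [MeasurableSpace Ω] (μ : Measure Ω) [IsProbabilityMeasure μ]
    (f : ℕ → Ω → ℝ) (g : Ω → ℝ)
    (hf : ∀ k, AEStronglyMeasurable (f k) μ)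
    (h : ∀ᵐ ω ∂μ, (∀ k, 0 ≤ f k ω) ∧ HasSum (fun k => f k ω) (g ω) ∧ g ω ≤ 1) :
    ∫ ω, g ω ∂μ = ∑' k, ∫ ω, f k ω ∂μ := by
  have hb : ∀ᵐ ω ∂μ, ∑' k, (‖f k ω‖₊ : ENNReal) ≤ 1 := by
    filter_upwards [h] with ω hω
    obtain ⟨h0, hs, hle⟩ := hω
    have e1 : ∀ k, (‖f k ω‖₊ : ENNReal) = ENNReal.ofReal (f k ω) := fun k =>
      Real.enorm_eq_ofReal (h0 k)
    rw [tsum_congr e1, ← ENNReal.ofReal_tsum_of_nonneg h0 hs.summable, hs.tsum_eq]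
    exact ENNReal.ofReal_le_one.mpr hle
  have key : ∑' k, ∫⁻ ω, (‖f k ω‖₊ : ENNReal) ∂μ ≠ ⊤ := by
    rw [← lintegral_tsum fun k => (hf k).aemeasurable.nnnorm.coe_nnreal_ennreal]
    have hle : ∫⁻ ω, ∑' k, (‖f k ω‖₊ : ENNReal) ∂μ ≤ ∫⁻ _, 1 ∂μ := lintegral_mono_ae hb
    refine ne_top_of_le_ne_top ?_ hle
    simp
  rw [← MeasureTheory.integral_tsum hf key]
  apply integral_congr_ae
  filter_upwards [h] with ω hω
  exact hω.2.1.tsum_eq.symm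

/-- for i.i.d. exponential (Gamma(1,1)) variables, the "missing moments"
`γ_m`, `1 ≤ m ≤ n−1`, of `C = Y/(√n R)` satisfy
`γ_{m−1} = Σ_{k=0}^∞ (−Δ)^k γ_m` for `2 ≤ m ≤ n`, and equivalently
`γ_m = γ_n + Σ_{k=1}^∞ p_{1,n,k} (n−m)_k/(n)_k` for `1 ≤ m ≤ n−1`. -/
theorem stmt_8 {Ω : Type*} [MeasurableSpace Ω] (μ : Measure Ω) [IsProbabilityMeasure μ]
    (n : ℕ) (hn : 2 ≤ n)
    (X : Fin n → Ω → ℝ) (hmeas : ∀ i, Measurable (X i))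
    (hindep : iIndepFun X μ)
    (hlaw : ∀ i, Measure.map (X i) μ = gammaMeasure 1 1)
    (Y R C : Ω → ℝ)
    (hY : ∀ ω, Y ω = ∑ i, X i ω)
    (hR : ∀ ω, R ω = Real.sqrt (∑ i, (X i ω) ^ 2))
    (hC : ∀ ω, C ω = Y ω / (Real.sqrt n * R ω))
    (γ : ℝ → ℝ) (hγ : ∀ m : ℝ, γ m = ∫ ω, (C ω) ^ m ∂μ)
    (p : ℕ → ℝ)
    (hp : ∀ k, p k = poch (n : ℝ) k / k.factorial *
      ∑ j ∈ Finset.range (k + 1), (-1 : ℝ) ^ j * (k.choose j) * γ ((n : ℝ) + j)) :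
    (∀ m : ℕ, 2 ≤ m → m ≤ n →
      γ ((m : ℝ) - 1) = ∑' k : ℕ,
        ∑ i ∈ Finset.range (k + 1), (-1 : ℝ) ^ i * (k.choose i) * γ ((m : ℝ) + i)) ∧
    (∀ m : ℕ, 1 ≤ m → m ≤ n - 1 →
      γ (m : ℝ) = γ (n : ℝ) +
        ∑' k : ℕ, p (k + 1) * poch ((n : ℝ) - m) (k + 1) / poch (n : ℝ) (k + 1)) := by
  have hn0 : 0 < n := by omega
  have hCm : Measurable C := by
    have hCeq : C = fun ω => (∑ i, X i ω) / (Real.sqrt n * Real.sqrt (∑ i, X i ω ^ 2)) := by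
      funext ω; rw [hC, hY, hR]
    rw [hCeq]
    exact (Finset.measurable_sum _ fun i _ => hmeas i).div
      (measurable_const.mul ((Finset.measurable_sum _ fun i _ => (hmeas i).pow_const 2).sqrt))
  have hXpos : ∀ i, ∀ᵐ ω ∂μ, 0 < X i ω := by
    intro i
    have h0 : μ (X i ⁻¹' Set.Iic 0) = 0 := by
      rw [← Measure.map_apply (hmeas i) measurableSet_Iic, hlaw i, gammaMeasure,
        withDensity_apply _ measurableSet_Iic]
      calc ∫⁻ x in Set.Iic 0, gammaPDF 1 1 x
          = ∫⁻ x in Set.Iio 0, gammaPDF 1 1 x := setLIntegral_congr Iio_ae_eq_Iic.symm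
        _ = 0 := by
            rw [setLIntegral_congr_fun measurableSet_Iio
              (fun x (hx : x ∈ Set.Iio 0) => gammaPDF_of_neg hx), lintegral_zero]
    have hset : {ω | ¬ 0 < X i ω} = X i ⁻¹' Set.Iic 0 := by
      ext ω; simp [not_lt]
    rw [ae_iff, hset]
    exact h0
  have hCae : ∀ᵐ ω ∂μ, 0 < C ω ∧ C ω ≤ 1 := by
    filter_upwards [ae_all_iff.mpr hXpos] with ω hω
    have hifin : Nonempty (Fin n) := ⟨⟨0, hn0⟩⟩
    have hs : 0 < Y ω := by
      rw [hY]; exact Finset.sum_pos (fun i _ => hω i) Finset.univ_nonempty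
    have hq : 0 < ∑ i, X i ω ^ 2 :=
      Finset.sum_pos (fun i _ => pow_pos (hω i) 2) Finset.univ_nonempty
    have hRp : 0 < R ω := by rw [hR]; exact Real.sqrt_pos.mpr hq
    have hsn : 0 < Real.sqrt n := Real.sqrt_pos.mpr (by exact_mod_cast hn0)
    constructor
    · rw [hC]; exact div_pos hs (mul_pos hsn hRp)
    · rw [hC, div_le_one (mul_pos hsn hRp)]
      have h2 : (Y ω) ^ 2 ≤ (n : ℝ) * ∑ i, X i ω ^ 2 := by
        rw [hY]
        have := sq_sum_le_card_mul_sum_sq (s := (Finset.univ : Finset (Fin n)))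
          (f := fun i => X i ω)
        simpa using this
      rw [hR, ← Real.sqrt_mul (by positivity)]
      exact (Real.le_sqrt hs.le (by positivity)).mpr h2
  have hintC : ∀ r : ℝ, 0 ≤ r → Integrable (fun ω => C ω ^ r) μ := by
    intro r hr
    have hm : AEStronglyMeasurable (fun ω => C ω ^ r) μ :=
      ((Real.continuous_rpow_const hr).measurable.comp hCm).aestronglyMeasurable
    refine (integrable_const (1 : ℝ)).mono' hm ?_
    filter_upwards [hCae] with ω hω
    rw [norm_of_nonneg (Real.rpow_nonneg hω.1.le r)]
    exact Real.rpow_le_one hω.1.le hω.2 hr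
  have hintf : ∀ (k : ℕ) (r : ℝ), 0 ≤ r →
      Integrable (fun ω => (1 - C ω) ^ k * C ω ^ r) μ := by
    intro k r hr
    have hm : AEStronglyMeasurable (fun ω => (1 - C ω) ^ k * C ω ^ r) μ :=
      (((measurable_const.sub hCm).pow_const k).mul
        ((Real.continuous_rpow_const hr).measurable.comp hCm)).aestronglyMeasurable
    refine (integrable_const (1 : ℝ)).mono' hm ?_
    filter_upwards [hCae] with ω hω
    have e0 : 0 ≤ 1 - C ω := by linarith [hω.2]
    have hcr : 0 ≤ C ω ^ r := Real.rpow_nonneg hω.1.le r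
    rw [norm_of_nonneg (by positivity)]
    have hA : (1 - C ω) ^ k ≤ 1 := pow_le_one₀ e0 (by linarith [hω.1])
    have hB : C ω ^ r ≤ 1 := Real.rpow_le_one hω.1.le hω.2 hr
    nlinarith [pow_nonneg e0 k]
  have hIkey : ∀ (k : ℕ) (r : ℝ), 0 ≤ r →
      ∫ ω, (1 - C ω) ^ k * C ω ^ r ∂μ
        = ∑ i ∈ Finset.range (k + 1), (-1 : ℝ) ^ i * (k.choose i) * γ (r + i) := by
    intro k r hr
    have e : ∫ ω, (1 - C ω) ^ k * C ω ^ r ∂μ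
        = ∫ ω, ∑ i ∈ Finset.range (k + 1), (-1 : ℝ) ^ i * (k.choose i) * C ω ^ (r + i) ∂μ := by
      apply integral_congr_ae
      filter_upwards [hCae] with ω hω
      exact pt_expand hω.1 k r
    have hint_sum : ∀ i : ℕ,
        Integrable (fun ω => (-1 : ℝ) ^ i * (k.choose i) * C ω ^ (r + i)) μ := by
      intro i
      have h0i : (0 : ℝ) ≤ r + i := by
        have : (0 : ℝ) ≤ (i : ℝ) := Nat.cast_nonneg i
        linarith
      exact (hintC (r + i) h0i).const_mul _
    rw [e, integral_finset_sum _ fun i _ => hint_sum i]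
    refine Finset.sum_congr rfl fun i _ => ?_
    rw [integral_const_mul, hγ (r + i)]
  constructor
  · -- Part 1
    intro m hm2 hmn
    have hr1 : (0 : ℝ) ≤ (m : ℝ) := by positivity
    have hmain := my_integral_tsum μ (fun k ω => (1 - C ω) ^ k * C ω ^ (m : ℝ))
      (fun ω => C ω ^ ((m : ℝ) - 1))
      (fun k => (hintf k (m : ℝ) hr1).aestronglyMeasurable)
      (by
        filter_upwards [hCae] with ω hω
        refine ⟨fun k => mul_nonneg (pow_nonneg (by linarith [hω.2]) _)
          (Real.rpow_nonneg hω.1.le _), pt_one hω.1 hω.2 (m : ℝ), ?_⟩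
        have hm1 : (0 : ℝ) ≤ (m : ℝ) - 1 := by
          have : (2 : ℝ) ≤ (m : ℝ) := by exact_mod_cast hm2
          linarith
        exact Real.rpow_le_one hω.1.le hω.2 hm1)
    rw [hγ ((m : ℝ) - 1), hmain]
    exact tsum_congr fun k => hIkey k (m : ℝ) hr1
  · -- Part 2
    intro m hm1 hmn
    set a := n - m with ha
    have hma : m + a = n := by omega
    have hacast : ((a : ℕ) : ℝ) = (n : ℝ) - m := by
      rw [ha]; exact_mod_cast Nat.cast_sub (show m ≤ n by omega)
    have hrn : (0 : ℝ) ≤ (n : ℝ) := by positivity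
    have hf_int : ∀ k : ℕ,
        Integrable (fun ω => poch (a : ℝ) (k + 1) / (k + 1).factorial *
          ((1 - C ω) ^ (k + 1) * C ω ^ (n : ℝ))) μ :=
      fun k => (hintf (k + 1) (n : ℝ) hrn).const_mul _
    have hmain := my_integral_tsum μ
      (fun k ω => poch (a : ℝ) (k + 1) / (k + 1).factorial *
        ((1 - C ω) ^ (k + 1) * C ω ^ (n : ℝ)))
      (fun ω => C ω ^ ((m : ℝ)) - C ω ^ ((n : ℝ)))
      (fun k => (hf_int k).aestronglyMeasurable)
      (by
        filter_upwards [hCae] with ω hω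
        have hpa : ∀ k, 0 ≤ poch (a : ℝ) k := fun k => poch_nonneg (by positivity) k
        refine ⟨fun k => mul_nonneg (div_nonneg (hpa _) (by positivity))
          (mul_nonneg (pow_nonneg (by linarith [hω.2]) _) (Real.rpow_nonneg hω.1.le _)), ?_, ?_⟩
        · have h := pt_two hω.1 hω.2 a m n hma
          have h' := (hasSum_nat_add_iff'
            (f := fun k => poch (a : ℝ) k / k.factorial * (1 - C ω) ^ k * C ω ^ (n : ℝ)) 1).mpr h
          have hfun : (fun k => poch (a : ℝ) (k + 1) / (k + 1).factorial *
              ((1 - C ω) ^ (k + 1) * C ω ^ (n : ℝ)))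
              = fun k => poch (a : ℝ) (k + 1) / (k + 1).factorial * (1 - C ω) ^ (k + 1)
                * C ω ^ (n : ℝ) := by
            funext k; ring
          have hval : C ω ^ ((m : ℝ)) - ∑ i ∈ Finset.range 1,
              poch (a : ℝ) i / i.factorial * (1 - C ω) ^ i * C ω ^ (n : ℝ)
              = C ω ^ ((m : ℝ)) - C ω ^ ((n : ℝ)) := by
            simp [poch]
          rw [hfun]
          rw [hval] at h'
          exact h'
        · have hmle : C ω ^ ((m : ℝ)) ≤ 1 :=
            Real.rpow_le_one hω.1.le hω.2 (by positivity)
          have hnn : 0 ≤ C ω ^ ((n : ℝ)) := Real.rpow_nonneg hω.1.le _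
          linarith)
    have hgint : ∫ ω, (C ω ^ ((m : ℝ)) - C ω ^ ((n : ℝ))) ∂μ = γ (m : ℝ) - γ (n : ℝ) := by
      rw [integral_sub (hintC (m : ℝ) (by positivity)) (hintC (n : ℝ) hrn),
        hγ (m : ℝ), hγ (n : ℝ)]
    have hterm : ∀ k : ℕ, p (k + 1) * poch ((n : ℝ) - m) (k + 1) / poch (n : ℝ) (k + 1)
        = ∫ ω, poch (a : ℝ) (k + 1) / (k + 1).factorial *
            ((1 - C ω) ^ (k + 1) * C ω ^ (n : ℝ)) ∂μ := by
      intro k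
      rw [integral_const_mul, ← hacast, hp (k + 1), ← hIkey (k + 1) (n : ℝ) hrn]
      have hpn : poch (n : ℝ) (k + 1) ≠ 0 :=
        (poch_pos (by exact_mod_cast hn0) (k + 1)).ne'
      have hfac : ((k + 1).factorial : ℝ) ≠ 0 := Nat.cast_ne_zero.mpr (k + 1).factorial_ne_zero
      field_simp
    have hts : ∑' k : ℕ, p (k + 1) * poch ((n : ℝ) - m) (k + 1) / poch (n : ℝ) (k + 1)
        = γ (m : ℝ) - γ (n : ℝ) := by
      rw [tsum_congr hterm, ← hmain, hgint]
    rw [hts]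
    ring
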